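/- Let s : I → ℝ be twice differentiable and strictly negative on the open interval I, satisfying s'' = (s')²/(2s) + (3/2)s³ + 4t·s² + 2t²·s on I. Then σ := √(−s) is twice differentiable and satisfies 4·σ''(t) = σ(t)·(3σ(t)² − 2t)·(σ(t)² − 2t) on I. -/

import Mathlib

theorem stmt_19 (I : Set ℝ) (hI : IsOpen I) (hI' : IsPreconnected I) (s : ℝ → ℝ)
    (hs1 : ∀ t ∈ I, DifferentiableAt ℝ s t)
    (hs2 : ∀ t ∈ I, DifferentiableAt ℝ (deriv s) t)
    (hneg : ∀ t ∈ I, s t < 0)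
    (heq : ∀ t ∈ I, deriv (deriv s) t
      = (deriv s t) ^ 2 / (2 * s t) + (3 / 2) * (s t) ^ 3 + 4 * t * (s t) ^ 2 + 2 * t ^ 2 * s t) :
    (∀ t ∈ I, DifferentiableAt ℝ (fun u => Real.sqrt (-s u)) t) ∧
    (∀ t ∈ I, DifferentiableAt ℝ (deriv (fun u => Real.sqrt (-s u))) t) ∧
    (∀ t ∈ I, 4 * deriv (deriv (fun u => Real.sqrt (-s u))) t
      = Real.sqrt (-s t) * (3 * (Real.sqrt (-s t)) ^ 2 - 2 * t)
        * ((Real.sqrt (-s t)) ^ 2 - 2 * t)) := by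
  set σ : ℝ → ℝ := fun u => Real.sqrt (-s u) with hσdef
  have hpos : ∀ t ∈ I, 0 < -s t := fun t ht => by linarith [hneg t ht]
  have hσpos : ∀ t ∈ I, 0 < σ t := fun t ht => Real.sqrt_pos.mpr (hpos t ht)
  have hsq : ∀ t ∈ I, σ t ^ 2 = -s t := fun t ht => Real.sq_sqrt (hpos t ht).le
  have hd1 : ∀ t ∈ I, HasDerivAt σ (-deriv s t / (2 * σ t)) t := by
    intro t ht
    have h1 : HasDerivAt (fun u => -s u) (-deriv s t) t := ((hs1 t ht).hasDerivAt).neg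
    have h2 := (Real.hasDerivAt_sqrt (ne_of_gt (hpos t ht))).comp t h1
    convert h2 using 1
    show -deriv s t / (2 * Real.sqrt (-s t)) = _
    ring
    all_goals rfl
  have hderiv1 : ∀ t ∈ I, deriv σ t = -deriv s t / (2 * σ t) :=
    fun t ht => (hd1 t ht).deriv
  have hEv : ∀ t ∈ I, deriv σ =ᶠ[nhds t] fun u => -deriv s u / (2 * σ u) := by
    intro t ht
    filter_upwards [hI.mem_nhds ht] with u hu using hderiv1 u hu
  have hd2 : ∀ t ∈ I, HasDerivAt (fun u => -deriv s u / (2 * σ u))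
      ((-deriv (deriv s) t * (2 * σ t) - (-deriv s t) * (2 * (-deriv s t / (2 * σ t))))
        / (2 * σ t) ^ 2) t := by
    intro t ht
    have hnum : HasDerivAt (fun u => -deriv s u) (-deriv (deriv s) t) t :=
      ((hs2 t ht).hasDerivAt).neg
    have hden : HasDerivAt (fun u => 2 * σ u) (2 * (-deriv s t / (2 * σ t))) t :=
      (hd1 t ht).const_mul 2
    exact hnum.div hden (ne_of_gt (by linarith [hσpos t ht]))
  have hd2' : ∀ t ∈ I, HasDerivAt (deriv σ)
      ((-deriv (deriv s) t * (2 * σ t) - (-deriv s t) * (2 * (-deriv s t / (2 * σ t))))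
        / (2 * σ t) ^ 2) t :=
    fun t ht => (hd2 t ht).congr_of_eventuallyEq (hEv t ht)
  refine ⟨fun t ht => (hd1 t ht).differentiableAt,
    fun t ht => (hd2' t ht).differentiableAt, fun t ht => ?_⟩
  have key := (hd2' t ht).deriv
  rw [key, heq t ht]
  have ha : σ t ≠ 0 := ne_of_gt (hσpos t ht)
  have hst : s t = -(σ t) ^ 2 := by linarith [hsq t ht]
  have hσt : Real.sqrt (-s t) = σ t := rfl
  rw [hσt, hst]
  field_simp
  ring
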